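/- Let X be a Bernoulli random variable with parameter p, where p, q ∈ (1/4, 3/4). Define Z = X·log(p/q) + (1−X)·log((1−p)/(1−q)) − (p·log(p/q) + (1−p)·log((1−p)/(1−q))). Then Z is 8(p−q)²-subgaussian: for every λ ∈ ℝ, E[exp(λZ)] ≤ exp(4λ²(p−q)²). -/

import Mathlib

open MeasureTheory

open Real in

lemma hoeffding_bernoulli (p : ℝ) (hp0 : 0 < p) (hp1 : p < 1) (t : ℝ) :
    (1 - p) * Real.exp (-(p * t)) + p * Real.exp ((1 - p) * t) ≤ Real.exp (t ^ 2 / 8) := by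
  have h1p : 0 < 1 - p := by linarith
  set D : ℝ → ℝ := fun t => 1 - p + p * Real.exp t with hDdef
  have hDpos : ∀ s, 0 < D s := fun s => by positivity
  set L : ℝ → ℝ := fun t => Real.log (1 - p + p * Real.exp t) - p * t with hLdef
  set L' : ℝ → ℝ := fun t => p * Real.exp t / (1 - p + p * Real.exp t) - p with hL'def
  set L'' : ℝ → ℝ := fun t => p * Real.exp t * (1 - p) / (1 - p + p * Real.exp t) ^ 2 with hL''def
  have hDderiv : ∀ s, HasDerivAt D (p * Real.exp s) s := fun s =>
    ((Real.hasDerivAt_exp s).const_mul p).const_add (1 - p)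
  have hL : ∀ s, HasDerivAt L (L' s) s := by
    intro s
    have := ((hDderiv s).log (hDpos s).ne').sub ((hasDerivAt_id s).const_mul p)
    rw [mul_one] at this
    exact this
  have hL' : ∀ s, HasDerivAt L' (L'' s) s := by
    intro s
    have h := (((Real.hasDerivAt_exp s).const_mul p).div (hDderiv s) (hDpos s).ne').sub_const p
    refine h.congr_deriv ?_
    have hD := (hDpos s).ne'
    simp only [hL''def, hDdef]
    congr 1
    ring
  have hL''le : ∀ s, L'' s ≤ 1 / 4 := by
    intro s
    have hD := hDpos s
    rw [hL''def, div_le_iff₀ (by positivity)]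
    have he : 0 < Real.exp s := Real.exp_pos s
    nlinarith [sq_nonneg (1 - p - p * Real.exp s)]
  set φ : ℝ → ℝ := fun s => s / 4 - L' s with hφdef
  have hφderiv : ∀ s, HasDerivAt φ (1 / 4 - L'' s) s := fun s =>
    ((hasDerivAt_id s).div_const 4).sub (hL' s)
  have hφmono : Monotone φ := by
    apply monotone_of_deriv_nonneg (fun s => (hφderiv s).differentiableAt)
    intro s
    rw [(hφderiv s).deriv]
    linarith [hL''le s]
  have hφ0 : φ 0 = 0 := by simp [hφdef, hL'def]
  set ψ : ℝ → ℝ := fun s => s ^ 2 / 8 - L s with hψdef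
  have hψderiv : ∀ s, HasDerivAt ψ (φ s) s := by
    intro s
    have h := ((hasDerivAt_pow 2 s).div_const 8).sub (hL s)
    refine h.congr_deriv ?_
    show _ = s / 4 - L' s
    rw [show (2:ℕ) - 1 = 1 from rfl, pow_one]
    push_cast
    ring
  have hψ0 : ψ 0 = 0 := by simp [hψdef, hLdef]
  have hψdiff : Differentiable ℝ ψ := fun s => (hψderiv s).differentiableAt
  have hψnonneg : ∀ s, 0 ≤ ψ s := by
    intro s
    rcases le_total 0 s with hs | hs
    · have hmono : MonotoneOn ψ (Set.Ici 0) := by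
        apply monotoneOn_of_deriv_nonneg (convex_Ici 0) hψdiff.continuous.continuousOn
          hψdiff.differentiableOn
        intro x hx
        rw [(hψderiv x).deriv]
        rw [interior_Ici] at hx
        have := hφmono (le_of_lt hx)
        rw [hφ0] at this; exact this
      have := hmono Set.self_mem_Ici hs hs
      rwa [hψ0] at this
    · have hanti : AntitoneOn ψ (Set.Iic 0) := by
        apply antitoneOn_of_deriv_nonpos (convex_Iic 0) hψdiff.continuous.continuousOn
          hψdiff.differentiableOn
        intro x hx
        rw [(hψderiv x).deriv]
        rw [interior_Iic] at hx
        have := hφmono (le_of_lt hx)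
        rw [hφ0] at this; exact this
      have := hanti hs Set.self_mem_Iic hs
      rwa [hψ0] at this
  have hLle : L t ≤ t ^ 2 / 8 := by have := hψnonneg t; simp [hψdef] at this; linarith
  have hexp : Real.exp (L t) = (1 - p) * Real.exp (-(p * t)) + p * Real.exp ((1 - p) * t) := by
    rw [hLdef]
    simp only []
    rw [Real.exp_sub, Real.exp_log (hDpos t)]
    rw [div_eq_iff (Real.exp_pos _).ne', add_mul, mul_assoc, mul_assoc, ← Real.exp_add,
      ← Real.exp_add, show -(p * t) + p * t = 0 by ring, show (1 - p) * t + p * t = t by ring,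
      Real.exp_zero, mul_one]
  calc (1 - p) * Real.exp (-(p * t)) + p * Real.exp ((1 - p) * t) = Real.exp (L t) := hexp.symm
    _ ≤ Real.exp (t ^ 2 / 8) := Real.exp_le_exp.mpr hLle


lemma logodds_lipschitz {p q : ℝ} (hp : p ∈ Set.Ioo (1/4 : ℝ) (3/4))
    (hq : q ∈ Set.Ioo (1/4 : ℝ) (3/4)) :
    |(Real.log p - Real.log (1 - p)) - (Real.log q - Real.log (1 - q))| ≤ 16/3 * |p - q| := by
  have key := Convex.norm_image_sub_le_of_norm_hasDerivWithin_le
    (f := fun x : ℝ => Real.log x - Real.log (1 - x))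
    (f' := fun x : ℝ => x⁻¹ + (1 - x)⁻¹) (s := Set.Icc (1/4 : ℝ) (3/4)) (C := 16/3)
    (fun x hx => by
      have hx0 : (0:ℝ) < x := by have := hx.1; linarith
      have h1x : (0:ℝ) < 1 - x := by have := hx.2; linarith
      have h := (Real.hasDerivAt_log hx0.ne').sub
        ((((hasDerivAt_id x).const_sub 1)).log h1x.ne')
      have h2 : x⁻¹ - -1 / (1 - x) = x⁻¹ + (1 - x)⁻¹ := by
        field_simp
        ring
      simp only [id_eq] at h
      rw [h2] at h
      show HasDerivWithinAt _ (x⁻¹ + (1 - x)⁻¹) _ x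
      exact h.hasDerivWithinAt)
    (fun x hx => by
      have hx0 : (0:ℝ) < x := by have := hx.1; linarith
      have h1x : (0:ℝ) < 1 - x := by have := hx.2; linarith
      have hx1 := hx.1; have hx2 := hx.2
      show ‖x⁻¹ + (1 - x)⁻¹‖ ≤ 16/3
      rw [Real.norm_eq_abs, abs_of_nonneg (by positivity),
        inv_eq_one_div, inv_eq_one_div, div_add_div _ _ hx0.ne' h1x.ne',
        div_le_iff₀ (by positivity)]
      nlinarith [mul_nonneg (by linarith : (0:ℝ) ≤ x - 1/4) (by linarith : (0:ℝ) ≤ 3/4 - x)])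
    (convex_Icc _ _)
    (Set.mem_Icc_of_Ioo hq) (Set.mem_Icc_of_Ioo hp)
  rw [Real.norm_eq_abs, Real.norm_eq_abs] at key
  exact key

/-- If `X` is Bernoulli(p) with `p, q ∈ (1/4, 3/4)`, then the centered
realized log-likelihood ratio `Z` is `8(p−q)²`-subgaussian:
`E[exp(λZ)] ≤ exp(4λ²(p−q)²)` for all `λ`. -/
theorem stmt_0 {Ω : Type*} [MeasurableSpace Ω] (μ : Measure Ω) [IsProbabilityMeasure μ]
    (p q : ℝ) (hp : p ∈ Set.Ioo (1/4 : ℝ) (3/4)) (hq : q ∈ Set.Ioo (1/4 : ℝ) (3/4))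
    (X : Ω → ℝ) (hXmeas : Measurable X)
    (hX01 : ∀ ω, X ω = 0 ∨ X ω = 1)
    (hXp : μ {ω | X ω = 1} = ENNReal.ofReal p)
    (Z : Ω → ℝ)
    (hZ : ∀ ω, Z ω = X ω * Real.log (p / q) + (1 - X ω) * Real.log ((1 - p) / (1 - q))
        - (p * Real.log (p / q) + (1 - p) * Real.log ((1 - p) / (1 - q)))) :
    ∀ l : ℝ, ∫ ω, Real.exp (l * Z ω) ∂μ ≤ Real.exp (4 * l ^ 2 * (p - q) ^ 2) := by
  intro l
  have hp0 : (0:ℝ) < p := by have := hp.1; linarith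
  have hp1 : p < 1 := by have := hp.2; linarith
  have hq0 : (0:ℝ) < q := by have := hq.1; linarith
  have hq1 : q < 1 := by have := hq.2; linarith
  set c : ℝ := Real.log (p / q) - Real.log ((1 - p) / (1 - q)) with hc
  have hZc : ∀ ω, Z ω = (X ω - p) * c := by intro ω; rw [hZ ω]; ring
  set e0 : ℝ := Real.exp (-(p * (l * c))) with he0
  set e1 : ℝ := Real.exp ((1 - p) * (l * c)) with he1
  have hpt : ∀ ω, Real.exp (l * Z ω) = e0 + X ω * (e1 - e0) := by
    intro ω
    rcases hX01 ω with h | h <;> rw [hZc ω, h]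
    · rw [show l * ((0 - p) * c) = -(p * (l * c)) by ring]; ring
    · rw [show l * ((1 - p) * c) = (1 - p) * (l * c) by ring]; ring
  have hs : MeasurableSet {ω | X ω = 1} := hXmeas (measurableSet_singleton 1)
  have hXeq : X = Set.indicator {ω | X ω = 1} (fun _ => (1:ℝ)) := by
    funext ω
    rcases hX01 ω with h | h <;> simp [Set.indicator_apply, h]
  have hXint : Integrable X μ := by
    rw [hXeq]; exact (integrable_const 1).indicator hs
  have hXval : ∫ ω, X ω ∂μ = p := by
    rw [show (fun ω => X ω) = X from rfl, hXeq, integral_indicator_const (1:ℝ) hs, measureReal_def, hXp,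
      ENNReal.toReal_ofReal hp0.le, smul_eq_mul, mul_one]
  have hint : ∫ ω, Real.exp (l * Z ω) ∂μ = (1 - p) * e0 + p * e1 := by
    rw [show (fun ω => Real.exp (l * Z ω)) = fun ω => e0 + X ω * (e1 - e0) from funext hpt]
    rw [integral_add (integrable_const _) (hXint.mul_const _), integral_const,
      integral_mul_const, hXval]
    simp
    ring
  rw [hint]
  have hcc : |c| ≤ 16/3 * |p - q| := by
    have h := logodds_lipschitz hp hq
    rw [hc, Real.log_div hp0.ne' hq0.ne',
      Real.log_div (by linarith : (1:ℝ) - p ≠ 0) (by linarith : (1:ℝ) - q ≠ 0)]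
    convert h using 2
    ring
  have hc2 : c ^ 2 ≤ 256/9 * (p - q) ^ 2 := by
    have h := mul_self_le_mul_self (abs_nonneg c) hcc
    rw [abs_mul_abs_self] at h
    have h2 : 16/3 * |p - q| * (16/3 * |p - q|) = 256/9 * (p - q) ^ 2 := by
      rw [show 16/3 * |p - q| * (16/3 * |p - q|) = 256/9 * (|p - q| * |p - q|) by ring,
        abs_mul_abs_self]
      ring
    rw [h2] at h
    nlinarith [h]
  calc (1 - p) * e0 + p * e1 ≤ Real.exp ((l * c) ^ 2 / 8) :=
        hoeffding_bernoulli p hp0 hp1 (l * c)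
    _ ≤ Real.exp (4 * l ^ 2 * (p - q) ^ 2) := by
        apply Real.exp_le_exp.mpr
        nlinarith [mul_le_mul_of_nonneg_left hc2 (sq_nonneg l)]
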